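/- Assume the primal-dual pair {(P),(D)} (with data c ∈ X*, b ∈ Y*) is consistent and the value v of the game G = (α,β,A) (for some α ∈ int C*, β ∈ int K*) equals 0. Then (P) is strictly feasible if and only if every y ∈ T with −A*y ∈ C* satisfies ⟨y,b⟩ < 0, where T := {y ∈ K : ⟨y,β⟩ = 1}. -/

import Mathlib

set_option synthInstance.maxHeartbeats 400000

/-- If `a + s*b ≤ 0` for all positive `s`, then `a ≤ 0`. -/
lemma aux_add_le (a b : ℝ) (h : ∀ s : ℝ, 0 < s → a + s * b ≤ 0) : a ≤ 0 := by
  by_contra hc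
  push_neg at hc
  rcases le_or_gt 0 b with hb | hb
  · have := h 1 one_pos; nlinarith
  · have hs : (0:ℝ) < a / (2 * -b) := div_pos hc (by linarith)
    have h1 := h _ hs
    have hsb : a / (2 * -b) * (2 * -b) = a := div_mul_cancel₀ a (by linarith)
    nlinarith [mul_pos hs (neg_pos.2 hb)]

/-- If `t*a < u` for all positive `t`, then `a ≤ 0`. -/
lemma aux_mul_lt (a u : ℝ) (h : ∀ t : ℝ, 0 < t → t * a < u) : a ≤ 0 := by
  by_contra hc
  push_neg at hc
  have ht : (0:ℝ) < (|u| + 1) / a := by positivity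
  have h1 := h _ ht
  have h2 : (|u| + 1) / a * a = |u| + 1 := div_mul_cancel₀ _ (ne_of_gt hc)
  nlinarith [abs_nonneg u, le_abs_self u]

/-- A functional in the interior of the dual cone is strictly positive on nonzero cone
elements. -/
lemma interior_dual_pos {E : Type*} [NormedAddCommGroup E] [NormedSpace ℝ E]
    (K : Set E) (Kstar : Set (E →L[ℝ] ℝ))
    (hKstar : Kstar = {z : E →L[ℝ] ℝ | ∀ y ∈ K, 0 ≤ z y})
    (z : E →L[ℝ] ℝ) (hz : z ∈ interior Kstar) (y : E) (hy : y ∈ K) (hy0 : y ≠ 0) :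
    0 < z y := by
  obtain ⟨ε, hε, hball⟩ := Metric.mem_nhds_iff.1 (mem_interior_iff_mem_nhds.1 hz)
  obtain ⟨g, hg1, hgy⟩ := exists_dual_vector ℝ y (norm_ne_zero_iff.mpr hy0)
  have hgy' : g y = ‖y‖ := by exact_mod_cast hgy
  have hmem : z - (ε / 2) • g ∈ Kstar := by
    apply hball
    simp only [Metric.mem_ball, dist_eq_norm]
    have h1 : z - (ε / 2) • g - z = -((ε / 2) • g) := by abel
    rw [h1, norm_neg]
    calc ‖(ε / 2) • g‖ ≤ ‖(ε / 2 : ℝ)‖ * ‖g‖ := ContinuousLinearMap.opNorm_smul_le _ _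
      _ = ε / 2 := by rw [hg1, Real.norm_eq_abs, abs_of_pos (half_pos hε)]; ring
      _ < ε := by linarith
  rw [hKstar] at hmem
  have h0 := hmem y hy
  simp only [ContinuousLinearMap.sub_apply, ContinuousLinearMap.smul_apply, smul_eq_mul] at h0
  have hny : 0 < ‖y‖ := norm_pos_iff.2 hy0
  rw [hgy'] at h0
  nlinarith

set_option maxHeartbeats 1000000 in
/-- Lemma 4.3, relation (4.4): if {(P),(D)} is consistent and the game
G = (α,β,A) has value v = 0, then (P) is strictly feasible iff every y ∈ T with
−A*y ∈ C* satisfies ⟨y,b⟩ < 0. -/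
theorem stmt12
    {X Y : Type*} [NormedAddCommGroup X] [NormedSpace ℝ X] [CompleteSpace X]
    [NormedAddCommGroup Y] [NormedSpace ℝ Y] [CompleteSpace Y]
    -- reflexivity of X and Y
    (hXrefl : Function.Surjective (NormedSpace.inclusionInDoubleDual ℝ X))
    (hYrefl : Function.Surjective (NormedSpace.inclusionInDoubleDual ℝ Y))
    (A : X →L[ℝ] (Y →L[ℝ] ℝ))
    -- closed convex cones C, K with solid dual cones
    (C : Set X) (K : Set Y)
    (hCcone : ∀ (r : ℝ), 0 ≤ r → ∀ x ∈ C, r • x ∈ C) (hCconv : Convex ℝ C)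
    (hCclosed : IsClosed C)
    (hKcone : ∀ (r : ℝ), 0 ≤ r → ∀ y ∈ K, r • y ∈ K) (hKconv : Convex ℝ K)
    (hKclosed : IsClosed K)
    (Cstar : Set (X →L[ℝ] ℝ)) (hCstar : Cstar = {w : X →L[ℝ] ℝ | ∀ x ∈ C, 0 ≤ w x})
    (Kstar : Set (Y →L[ℝ] ℝ)) (hKstar : Kstar = {z : Y →L[ℝ] ℝ | ∀ y ∈ K, 0 ≤ z y})
    -- data of the programs and consistency
    (c : X →L[ℝ] ℝ) (b : Y →L[ℝ] ℝ)
    (FeasP : Set X) (hFeasP : FeasP = {x | x ∈ C ∧ A x - b ∈ Kstar})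
    (FeasD : Set Y) (hFeasD : FeasD = {y | y ∈ K ∧ -(A.flip y) + c ∈ Cstar})
    (hPne : FeasP.Nonempty) (hDne : FeasD.Nonempty)
    -- the game G = (α,β,A) with α ∈ int C*, β ∈ int K*
    (α : X →L[ℝ] ℝ) (hα : α ∈ interior Cstar)
    (β : Y →L[ℝ] ℝ) (hβ : β ∈ interior Kstar)
    (S : Set X) (hS : S = {x ∈ C | α x = 1})
    (T : Set Y) (hT : T = {y ∈ K | β y = 1})
    -- finite security levels (F3)
    (hSne : S.Nonempty) (hTne : T.Nonempty)
    (hbb : ∀ x ∈ S, BddBelow ((fun y => A x y) '' T))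
    (hba : BddAbove ((fun x => sInf ((fun y => A x y) '' T)) '' S))
    (hba' : ∀ y ∈ T, BddAbove ((fun x => A x y) '' S))
    (hbb' : BddBelow ((fun y => sSup ((fun x => A x y) '' S)) '' T))
    -- v is the value of the game
    (v : ℝ)
    (hv : v = sSup ((fun x => sInf ((fun y => A x y) '' T)) '' S))
    (hv' : v = sInf ((fun y => sSup ((fun x => A x y) '' S)) '' T))
    -- hypothesis: the game value is 0
    (hv0 : v = 0) :
    ((∃ x ∈ C, A x - b ∈ interior Kstar) ↔
      (∀ y ∈ T, -(A.flip y) ∈ Cstar → b y < 0)) := by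
  -- 0 ∈ C and 0 ∈ K
  obtain ⟨x₀, hx₀⟩ := hSne
  have hx₀C : x₀ ∈ C := by rw [hS] at hx₀; exact hx₀.1
  have h0C : (0 : X) ∈ C := by simpa using hCcone 0 le_rfl x₀ hx₀C
  obtain ⟨y₀T, hy₀T⟩ := hTne
  have hy₀K : y₀T ∈ K := by rw [hT] at hy₀T; exact hy₀T.1
  have h0K : (0 : Y) ∈ K := by simpa using hKcone 0 le_rfl y₀T hy₀K
  constructor
  · -- forward direction
    rintro ⟨x, hxC, hxint⟩ y hyT hAy
    rw [hT] at hyT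
    have hy0 : y ≠ 0 := by
      intro h
      rw [h] at hyT
      simp at hyT
    have hpos : 0 < (A x - b) y :=
      interior_dual_pos K Kstar hKstar _ hxint y hyT.1 hy0
    rw [hCstar] at hAy
    have h2 := hAy x hxC
    simp only [ContinuousLinearMap.neg_apply, ContinuousLinearMap.flip_apply] at h2
    simp only [ContinuousLinearMap.sub_apply] at hpos
    linarith
  · -- backward direction
    intro hyp
    by_contra hns
    push_neg at hns
    -- separate M = {A x - b : x ∈ C} from interior Kstar
    set M : Set (Y →L[ℝ] ℝ) := (fun x => A x - b) '' C with hM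
    have hdisj : Disjoint (interior Kstar) M := by
      rw [Set.disjoint_right]
      rintro _ ⟨x, hxC, rfl⟩
      exact hns x hxC
    have hKstarConv : Convex ℝ Kstar := by
      rw [hKstar]
      intro w hw w' hw' s t hs ht hst
      intro y hy
      have h1 := hw y hy
      have h2 := hw' y hy
      simp only [ContinuousLinearMap.add_apply, ContinuousLinearMap.smul_apply, smul_eq_mul]
      nlinarith
    have hMconv : Convex ℝ M := by
      rintro _ ⟨x, hx, rfl⟩ _ ⟨x', hx', rfl⟩ s t hs ht hst
      refine ⟨s • x + t • x', hCconv hx hx' hs ht hst, ?_⟩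
      simp only [map_add, map_smul]
      ext z
      simp only [ContinuousLinearMap.sub_apply, ContinuousLinearMap.add_apply,
        ContinuousLinearMap.smul_apply, smul_eq_mul]
      linear_combination (b z) * hst
    obtain ⟨f, u, hfu1, hfu2⟩ :=
      geometric_hahn_banach_open (Convex.interior hKstarConv) isOpen_interior hMconv hdisj
    -- Kstar is a cone closed under addition
    have hKsmul : ∀ (r : ℝ), 0 ≤ r → ∀ z ∈ Kstar, r • z ∈ Kstar := by
      rw [hKstar]
      intro r hr z hz y hy
      simpa using mul_nonneg hr (hz y hy)
    have hKadd : ∀ z ∈ Kstar, ∀ z' ∈ Kstar, z + z' ∈ Kstar := by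
      rw [hKstar]
      intro z hz z' hz' y hy
      have h1 := hz y hy
      have h2 := hz' y hy
      simp only [ContinuousLinearMap.add_apply]; linarith
    obtain ⟨z₀, hz₀int⟩ : (interior Kstar).Nonempty := ⟨β, hβ⟩
    obtain ⟨ε, hε, hball⟩ := Metric.mem_nhds_iff.1 (mem_interior_iff_mem_nhds.1 hz₀int)
    -- adding a positive multiple of an interior point keeps one in the interior
    have hsmul_int : ∀ (s : ℝ), 0 < s → ∀ z ∈ Kstar, z + s • z₀ ∈ interior Kstar := by
      intro s hs z hz
      rw [mem_interior]
      refine ⟨Metric.ball (z + s • z₀) (s * ε), ?_, Metric.isOpen_ball,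
        Metric.mem_ball_self (by positivity)⟩
      intro w hw
      have h1 : (s⁻¹ : ℝ) • (w - z) ∈ Metric.ball z₀ ε := by
        rw [Metric.mem_ball, dist_eq_norm] at hw ⊢
        have heq : s⁻¹ • (w - z) - z₀ = s⁻¹ • (w - (z + s • z₀)) := by
          rw [smul_sub, smul_sub, smul_add, smul_smul, inv_mul_cancel₀ (ne_of_gt hs), one_smul]
          abel
        rw [heq]
        calc ‖s⁻¹ • (w - (z + s • z₀))‖ ≤ ‖(s⁻¹ : ℝ)‖ * ‖w - (z + s • z₀)‖ :=
              ContinuousLinearMap.opNorm_smul_le _ _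
          _ = s⁻¹ * ‖w - (z + s • z₀)‖ := by
              rw [Real.norm_eq_abs, abs_of_pos (inv_pos.2 hs)]
          _ < s⁻¹ * (s * ε) := by
              apply mul_lt_mul_of_pos_left hw (inv_pos.2 hs)
          _ = ε := by field_simp
      have h2 : s⁻¹ • (w - z) ∈ Kstar := hball h1
      have heq : w = z + s • (s⁻¹ • (w - z)) := by
        rw [smul_smul, mul_inv_cancel₀ (ne_of_gt hs), one_smul]
        abel
      rw [heq]
      exact hKadd z hz _ (hKsmul s (le_of_lt hs) _ h2)
    -- f ≤ 0 on Kstar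
    have hfneg : ∀ z ∈ Kstar, f z ≤ 0 := by
      intro z hz
      apply aux_add_le (f z) (f z₀)
      intro s hs
      apply aux_mul_lt
      intro t ht
      have hint : t • (z + s • z₀) ∈ interior Kstar := by
        have hz' : t • z ∈ Kstar := hKsmul t (le_of_lt ht) z hz
        have heq : t • (z + s • z₀) = t • z + (t * s) • z₀ := by
          rw [smul_add, smul_smul]
        rw [heq]
        exact hsmul_int (t * s) (by positivity) _ hz'
      have h1 := hfu1 _ hint
      simp only [map_smul, map_add, smul_eq_mul] at h1
      linarith
    have h0Kstar : (0 : Y →L[ℝ] ℝ) ∈ Kstar := by rw [hKstar]; intro y hy; simp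
    -- u ≥ 0
    have hu0 : 0 ≤ u := by
      by_contra hu
      push_neg at hu
      have hz₀neg : f z₀ < u := hfu1 z₀ hz₀int
      have hfz₀ : f z₀ < 0 := lt_trans hz₀neg hu
      have hs : (0:ℝ) < u / (2 * f z₀) := div_pos_iff.2 (Or.inr ⟨hu, by linarith⟩)
      have hint : (u / (2 * f z₀)) • z₀ ∈ interior Kstar := by
        have h1 := hsmul_int (u / (2 * f z₀)) hs 0 h0Kstar
        simpa using h1
      have h2 := hfu1 _ hint
      simp only [map_smul, smul_eq_mul] at h2
      have h3 : u / (2 * f z₀) * (2 * f z₀) = u := div_mul_cancel₀ u (by nlinarith)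
      nlinarith
    -- get y from reflexivity: z y = - f z for all z
    obtain ⟨y, hy₁⟩ := hYrefl (-f)
    have happ : ∀ z : Y →L[ℝ] ℝ, z y = - f z := by
      intro z
      have h1 := congrFun (congrArg DFunLike.coe hy₁) z
      simpa [NormedSpace.inclusionInDoubleDual] using h1
    -- y ≠ 0
    have hyne : y ≠ 0 := by
      intro h
      have hf0 : ∀ z : Y →L[ℝ] ℝ, f z = 0 := by
        intro z
        have h2 := happ z
        rw [h] at h2
        simp only [map_zero] at h2
        linarith
      have h1 : (0:ℝ) < u := by
        have := hfu1 z₀ hz₀int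
        rw [hf0 z₀] at this
        exact this
      have h2 : u ≤ 0 := by
        have := hfu2 (A x₀ - b) ⟨x₀, hx₀C, rfl⟩
        rw [hf0] at this
        exact this
      linarith
    -- y ∈ K via bipolar / separation
    have hyK : y ∈ K := by
      by_contra hyn
      obtain ⟨φ, s, hφ1, hφ2⟩ := geometric_hahn_banach_closed_point hKconv hKclosed hyn
      have hφneg : ∀ k ∈ K, φ k ≤ 0 := by
        intro k hk
        apply aux_mul_lt (φ k) s
        intro t ht
        have h1 := hφ1 (t • k) (hKcone t (le_of_lt ht) k hk)
        simpa using h1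
      have hs0 : 0 < s := by
        have := hφ1 0 h0K
        simpa using this
      have hφstar : -φ ∈ Kstar := by
        rw [hKstar]
        intro k hk
        simpa using hφneg k hk
      have h1 : (-φ) y = - f (-φ) := happ (-φ)
      have h2 : f (-φ) ≤ 0 := hfneg _ hφstar
      have h3 : 0 ≤ (-φ) y := by rw [h1]; linarith
      simp only [ContinuousLinearMap.neg_apply] at h3
      linarith
    -- key inequalities: A x y ≤ 0 for x ∈ C, and b y ≥ 0
    have hkey : ∀ x ∈ C, u ≤ - (A x) y + b y := by
      intro x hx
      have h1 := hfu2 (A x - b) ⟨x, hx, rfl⟩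
      have h2 : (A x - b) y = - f (A x - b) := happ _
      simp only [ContinuousLinearMap.sub_apply] at h2
      linarith
    have hby : 0 ≤ b y := by
      have := hkey 0 h0C
      simp only [map_zero, ContinuousLinearMap.zero_apply] at this
      linarith
    have hAxy : ∀ x ∈ C, A x y ≤ 0 := by
      intro x hx
      apply aux_mul_lt (A x y) (b y + 1)
      intro t ht
      have h1 := hkey (t • x) (hCcone t (le_of_lt ht) x hx)
      simp only [map_smul, ContinuousLinearMap.smul_apply, smul_eq_mul] at h1
      linarith
    -- β y > 0, normalize y to lie in T
    have hβy : 0 < β y := interior_dual_pos K Kstar hKstar β hβ y hyK hyne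
    set y' := (β y)⁻¹ • y with hy'
    have hy'T : y' ∈ T := by
      rw [hT]
      refine ⟨hKcone _ (le_of_lt (inv_pos.2 hβy)) y hyK, ?_⟩
      simp [hy', inv_mul_cancel₀ (ne_of_gt hβy)]
    have hy'C : -(A.flip y') ∈ Cstar := by
      rw [hCstar]
      intro x hx
      have h3 : (-(A.flip ((β y)⁻¹ • y))) x = -((β y)⁻¹ * (A x) y) := by
        rw [ContinuousLinearMap.neg_apply, ContinuousLinearMap.flip_apply, map_smul,
          smul_eq_mul]
      rw [hy', h3]
      have h1 := hAxy x hx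
      have h2 : (0:ℝ) ≤ (β y)⁻¹ := le_of_lt (inv_pos.2 hβy)
      nlinarith
    have hlt := hyp y' hy'T hy'C
    have hby' : b y' = (β y)⁻¹ * b y := by simp [hy']
    rw [hby'] at hlt
    nlinarith [inv_pos.2 hβy]
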